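/- For the kernel k₂(t,s) = (1−s) − α₂·1_{s≤ξ} − (t−s)·1_{s≤t} with 0 < α₂ < 1−ξ, 0 < ξ < 1, one has sup_{t∈[0,1]} ∫₀¹ |k₂(t,s)| ds = 1/2 − α₂ξ. -/

import Mathlib

open Set MeasureTheory

/-- The Green's function of `v'' = −h`, `v'(0) = 0`, `v(1) = α₂v'(ξ)`. -/
noncomputable def greenK2 (α₂ ξ : ℝ) (t s : ℝ) : ℝ :=
  (1 - s) - (if s ≤ ξ then α₂ else 0) - (if s ≤ t then t - s else 0)

lemma intA : ∫ s in Icc (0:ℝ) 1, (1 - s) = 1/2 := by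
  rw [MeasureTheory.integral_Icc_eq_integral_Ioc, ← intervalIntegral.integral_of_le (by norm_num : (0:ℝ) ≤ 1)]
  simp [intervalIntegral.integral_sub intervalIntegrable_const intervalIntegral.intervalIntegrable_id]
  norm_num

lemma indB (ξ c : ℝ) : (fun s : ℝ => if s ≤ ξ then c else 0) = Set.indicator (Iic ξ) (fun _ => c) := by
  ext s; simp [Set.indicator_apply]

lemma indC (t : ℝ) : (fun s : ℝ => if s ≤ t then t - s else 0) = Set.indicator (Iic t) (fun s => t - s) := by
  ext s; simp [Set.indicator_apply]

lemma intB (ξ c : ℝ) (h0 : 0 ≤ ξ) (h1 : ξ ≤ 1) :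
    ∫ s in Icc (0:ℝ) 1, (if s ≤ ξ then c else 0) = c * ξ := by
  rw [indB, MeasureTheory.setIntegral_indicator measurableSet_Iic]
  have : Icc (0:ℝ) 1 ∩ Iic ξ = Icc 0 ξ := by
    ext x; simp only [mem_inter_iff, mem_Icc, mem_Iic]
    constructor
    · rintro ⟨⟨a, b⟩, c⟩; exact ⟨a, c⟩
    · rintro ⟨a, b⟩; exact ⟨⟨a, b.trans h1⟩, b⟩
  rw [this, setIntegral_const]
  simp only [Real.volume_Icc, sub_zero, smul_eq_mul]
  rw [Real.volume_real_Icc_of_le h0]; ring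

lemma intC (t : ℝ) (h0 : 0 ≤ t) (h1 : t ≤ 1) :
    ∫ s in Icc (0:ℝ) 1, (if s ≤ t then t - s else 0) = t^2 / 2 := by
  rw [indC, MeasureTheory.setIntegral_indicator measurableSet_Iic]
  have : Icc (0:ℝ) 1 ∩ Iic t = Icc 0 t := by
    ext x; simp only [mem_inter_iff, mem_Icc, mem_Iic]
    constructor
    · rintro ⟨⟨a, b⟩, c⟩; exact ⟨a, c⟩
    · rintro ⟨a, b⟩; exact ⟨⟨a, b.trans h1⟩, b⟩
  rw [this, MeasureTheory.integral_Icc_eq_integral_Ioc,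
    ← intervalIntegral.integral_of_le h0]
  rw [intervalIntegral.integral_sub intervalIntegrable_const intervalIntegral.intervalIntegrable_id]
  simp
  ring

lemma integB (ξ c : ℝ) : IntegrableOn (fun s : ℝ => if s ≤ ξ then c else 0) (Icc 0 1) := by
  rw [indB]
  exact (IntegrableOn.indicator (integrableOn_const
    (by simp [Real.volume_Icc])) measurableSet_Iic)

lemma integC (t : ℝ) : IntegrableOn (fun s : ℝ => if s ≤ t then t - s else 0) (Icc 0 1) := by
  rw [indC]
  exact ((Continuous.integrableOn_Icc (by continuity)).indicator measurableSet_Iic)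

lemma integA : IntegrableOn (fun s : ℝ => 1 - s) (Icc (0:ℝ) 1) :=
  Continuous.integrableOn_Icc (by continuity)

lemma intK (α₂ ξ t : ℝ) (h0 : 0 ≤ ξ) (h1 : ξ ≤ 1) (ht0 : 0 ≤ t) (ht1 : t ≤ 1) :
    ∫ s in Icc (0:ℝ) 1, greenK2 α₂ ξ t s = 1/2 - α₂ * ξ - t^2 / 2 := by
  unfold greenK2
  have h12 : IntegrableOn (fun s : ℝ => (1 - s) - if s ≤ ξ then α₂ else 0) (Icc 0 1) :=
    integA.sub (integB ξ α₂)
  rw [MeasureTheory.integral_sub h12 (integC t),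
    MeasureTheory.integral_sub integA (integB ξ α₂), intA, intB ξ α₂ h0 h1, intC t ht0 ht1]

lemma integK (α₂ ξ t : ℝ) : IntegrableOn (fun s => greenK2 α₂ ξ t s) (Icc (0:ℝ) 1) := by
  unfold greenK2
  exact (integA.sub (integB ξ α₂)).sub (integC t)


/-- for `0 < ξ < 1`, `0 < α₂ < 1 − ξ`,
`sup_{t∈[0,1]} ∫₀¹ |k₂(t,s)| ds = 1/2 − α₂ξ` (the supremum is attained). -/
theorem stmt12 (α₂ ξ : ℝ) (hξ₀ : 0 < ξ) (hξ₁ : ξ < 1)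
    (hα₀ : 0 < α₂) (hα₁ : α₂ < 1 - ξ) :
    IsGreatest ((fun t => ∫ s in Icc (0:ℝ) 1, |greenK2 α₂ ξ t s|) '' Icc (0:ℝ) 1)
      (1 / 2 - α₂ * ξ) := by
  constructor
  · refine ⟨0, by simp, ?_⟩
    have hcong : ∀ s ∈ Icc (0:ℝ) 1, |greenK2 α₂ ξ 0 s| = greenK2 α₂ ξ 0 s := by
      intro s hs
      obtain ⟨hs0, hs1⟩ := hs
      apply abs_of_nonneg
      unfold greenK2
      split_ifs <;> linarith
    show ∫ s in Icc (0:ℝ) 1, |greenK2 α₂ ξ 0 s| = 1 / 2 - α₂ * ξ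
    rw [MeasureTheory.setIntegral_congr_fun measurableSet_Icc hcong,
      intK α₂ ξ 0 hξ₀.le hξ₁.le le_rfl zero_le_one]
    norm_num
  · rintro x ⟨t, ht, rfl⟩
    obtain ⟨ht0, ht1⟩ := ht
    simp only
    by_cases hc : t ≤ 1 - α₂
    · have hcong : ∀ s ∈ Icc (0:ℝ) 1, |greenK2 α₂ ξ t s| = greenK2 α₂ ξ t s := by
        intro s hs
        obtain ⟨hs0, hs1⟩ := hs
        apply abs_of_nonneg
        unfold greenK2
        split_ifs <;> linarith
      rw [MeasureTheory.setIntegral_congr_fun measurableSet_Icc hcong,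
        intK α₂ ξ t hξ₀.le hξ₁.le ht0 ht1]
      nlinarith [sq_nonneg t]
    · push_neg at hc
      have hξt : ξ < t := by linarith
      have hcong : ∀ s ∈ Icc (0:ℝ) 1,
          |greenK2 α₂ ξ t s| = greenK2 α₂ ξ t s + (if s ≤ ξ then 2*(t+α₂-1) else 0) := by
        intro s hs
        obtain ⟨hs0, hs1⟩ := hs
        unfold greenK2
        rcases le_or_gt s ξ with h | h
        · have hst : s ≤ t := le_trans h hξt.le
          rw [if_pos h, if_pos h, if_pos hst, abs_of_nonpos (by linarith)]
          ring
        · rw [if_neg (not_le.2 h), if_neg (not_le.2 h)]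
          split_ifs with h2
          · rw [abs_of_nonneg (by linarith)]; ring
          · rw [abs_of_nonneg (by linarith)]; ring
      rw [MeasureTheory.setIntegral_congr_fun measurableSet_Icc hcong,
        MeasureTheory.integral_add (integK α₂ ξ t) (integB ξ (2*(t+α₂-1))),
        intK α₂ ξ t hξ₀.le hξ₁.le ht0 ht1, intB ξ _ hξ₀.le hξ₁.le]
      nlinarith [sq_nonneg (t - 2*ξ), mul_pos hξ₀ (by linarith : (0:ℝ) < 1 - α₂ - ξ)]
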